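/- For every even integer d ≥ 4 and every g ∈ ℕ, there exists a d-regular graph G with girth at least g whose resistance equals d/2. -/

import Mathlib

open scoped Classical
open Finset

namespace AddEdge

variable {V : Type*} [Fintype V] [DecidableEq V]

/-- `N'(e)`-sum: the sum of the colors of the edges of `G` sharing an endpoint
with `e`, excluding `e` itself. -/
noncomputable def nbrSum (G : SimpleGraph V) (c : Sym2 V → ℕ) (e : Sym2 V) : ℕ :=
  ∑ f ∈ univ.filter (fun f => f ∈ G.edgeSet ∧ f ≠ e ∧ ∃ v, v ∈ e ∧ v ∈ f), c f

/-- `c` is a proper edge coloring of `G`: distinct incident edges get distinct colors. -/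
def IsProperEdgeColoring (G : SimpleGraph V) (c : Sym2 V → ℕ) : Prop :=
  ∀ e ∈ G.edgeSet, ∀ f ∈ G.edgeSet, e ≠ f → (∃ v, v ∈ e ∧ v ∈ f) → c e ≠ c f

/-- `c` is an additive edge coloring of `G`: distinct incident edges have distinct
sums of colors over their incident-edge neighborhoods. -/
def IsAdditiveEdgeColoring (G : SimpleGraph V) (c : Sym2 V → ℕ) : Prop :=
  ∀ e ∈ G.edgeSet, ∀ f ∈ G.edgeSet, e ≠ f → (∃ v, v ∈ e ∧ v ∈ f) →
    nbrSum G c e ≠ nbrSum G c f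

/-- The chromatic index: the least `k` such that `G` has a proper edge coloring
with colors from `{1, …, k}`. -/
noncomputable def chromIndex (G : SimpleGraph V) : ℕ :=
  sInf {k | ∃ c : Sym2 V → ℕ, (∀ e ∈ G.edgeSet, c e ∈ Finset.Icc 1 k) ∧
    IsProperEdgeColoring G c}

/-- The proper additive chromatic index `η'_p(G)`: the least `k` such that `G` has an
edge coloring with colors from `{1, …, k}` that is both proper and additive. -/
noncomputable def properAddIndex (G : SimpleGraph V) : ℕ :=
  sInf {k | ∃ c : Sym2 V → ℕ, (∀ e ∈ G.edgeSet, c e ∈ Finset.Icc 1 k) ∧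
    IsProperEdgeColoring G c ∧ IsAdditiveEdgeColoring G c}

/-- `e'` is 2-reachable from `e`: there is a path of length two in `G` from an
endpoint of `e` to an endpoint of `e'`. -/
def TwoReachable (G : SimpleGraph V) (e e' : Sym2 V) : Prop :=
  ∃ x y z : V, x ∈ e ∧ z ∈ e' ∧ G.Adj x y ∧ G.Adj y z ∧ x ≠ z

/-- `c` is a spaced `(d+1)`-edge-coloring of the `d`-regular graph `G`: a proper
edge coloring with colors `{1, …, d+1}` such that no edge colored `d+1` is
2-reachable from an edge colored `d+1`. -/
def IsSpacedColoring (G : SimpleGraph V) (d : ℕ) (c : Sym2 V → ℕ) : Prop :=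
  (∀ e ∈ G.edgeSet, c e ∈ Finset.Icc 1 (d + 1)) ∧ IsProperEdgeColoring G c ∧
    ∀ e ∈ G.edgeSet, ∀ e' ∈ G.edgeSet, c e = d + 1 → c e' = d + 1 →
      ¬ TwoReachable G e e'

/-- The resistance of a `d`-regular Vizing-class-2 graph `G`: the minimum number of
edges colored `d+1` over all proper `(d+1)`-edge-colorings of `G`. -/
noncomputable def resistance (G : SimpleGraph V) (d : ℕ) : ℕ :=
  sInf {r | ∃ c : Sym2 V → ℕ, (∀ e ∈ G.edgeSet, c e ∈ Finset.Icc 1 (d + 1)) ∧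
    IsProperEdgeColoring G c ∧
    (univ.filter (fun e => e ∈ G.edgeSet ∧ c e = d + 1)).card = r}

namespace Aux

abbrev A (k : ℕ) := Fin k × Bool

def linv {k : ℕ} (a : A k) : A k := (a.1, !a.2)

@[simp] lemma linv_linv {k : ℕ} (a : A k) : linv (linv a) = a := by
  simp [linv]

lemma linv_ne {k : ℕ} (a : A k) : linv a ≠ a := by
  simp [linv, Prod.ext_iff]

def Red {k : ℕ} (l : List (A k)) : Prop := l.Chain' (fun p q => q ≠ linv p)

@[simp] lemma red_nil {k : ℕ} : Red ([] : List (A k)) := List.isChain_nil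

lemma Red.tail {k : ℕ} {l : List (A k)} (h : Red l) : Red l.tail := List.IsChain.tail h

def XX (k L : ℕ) : Type := {l : List (A k) // Red l ∧ l.length ≤ L}

instance (k L : ℕ) : DecidableEq (XX k L) := fun a b =>
  decidable_of_iff (a.1 = b.1) Subtype.ext_iff.symm

noncomputable instance (k L : ℕ) : Fintype (XX k L) := by
  apply Fintype.ofInjective (fun x : XX k L => (fun j : Fin L => x.1[(j : ℕ)]?))
  rintro ⟨l₁, h₁, hl₁⟩ ⟨l₂, h₂, hl₂⟩ h
  apply Subtype.ext
  dsimp at h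
  apply List.ext_getElem?
  intro n
  by_cases hn : n < L
  · exact congrFun h ⟨n, hn⟩
  · rw [List.getElem?_eq_none (le_trans hl₁ (not_lt.1 hn)),
      List.getElem?_eq_none (le_trans hl₂ (not_lt.1 hn))]

def eps (k L : ℕ) : XX k L := ⟨[], red_nil, by simp⟩

def act {k : ℕ} (a : A k) : List (A k) → List (A k)
  | [] => [a]
  | b :: t => if b = linv a then t else a :: b :: t

lemma act_cons_of_red {k : ℕ} {a : A k} {l : List (A k)} (h : Red (a :: l)) :
    act a l = a :: l := by
  cases l with
  | nil => rfl
  | cons b t =>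
      have hb : b ≠ linv a := (List.isChain_cons_cons.1 h).1
      simp [act, hb]

lemma Red.act {k : ℕ} (a : A k) {l : List (A k)} (h : Red l) : Red (act a l) := by
  cases l with
  | nil => exact List.isChain_singleton _
  | cons b t =>
      by_cases hb : b = linv a
      · simpa [Aux.act, hb] using h.tail
      · have : Red (a :: b :: t) := List.isChain_cons_cons.2 ⟨hb, h⟩
        simpa [Aux.act, hb] using this

lemma act_act {k : ℕ} (a : A k) {l : List (A k)} (h : Red l) :
    act (linv a) (act a l) = l := by
  cases l with
  | nil => simp [act, linv_ne]
  | cons b t =>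
      by_cases hb : b = linv a
      · subst hb
        cases t with
        | nil => simp [act]
        | cons c u =>
            have hc : c ≠ a := by
              have := (List.isChain_cons_cons.1 h).1; simpa using this
            simp [act, hc]
      · simp [act, hb, linv_ne a]

lemma act_length {k : ℕ} (a : A k) (l : List (A k)) :
    (act a l).length ≤ l.length + 1 := by
  cases l with
  | nil => simp [act]
  | cons b t =>
      by_cases hb : b = linv a <;> simp [act, hb] <;> omega

/-- extend an injective-on-S function to a permutation agreeing with it on S. -/
lemma exists_perm_extend {α : Type*} [Fintype α] [DecidableEq α] (f : α → α) (S : Finset α)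
    (hinj : ∀ x ∈ S, ∀ y ∈ S, f x = f y → x = y) :
    ∃ π : Equiv.Perm α, ∀ x ∈ S, π x = f x := by
  classical
  set T := S.image f with hT
  have hcard : T.card = S.card := Finset.card_image_of_injOn fun x hx y hy => hinj x hx y hy
  have hcompl : (univ \ S).card = (univ \ T).card := by
    rw [Finset.card_sdiff_of_subset (subset_univ S), Finset.card_sdiff_of_subset (subset_univ T), hcard]
  let e := Finset.equivOfCardEq hcompl
  let g : α → α := fun x => if h : x ∈ S then f x else (e ⟨x, by simp [h]⟩ : α)
  have hg : Function.Injective g := by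
    intro x y hxy
    by_cases hx : x ∈ S <;> by_cases hy : y ∈ S
    · exact hinj x hx y hy (by simpa [g, hx, hy] using hxy)
    · exfalso
      have h1 : g x ∈ T := by simp only [g, dif_pos hx]; exact Finset.mem_image_of_mem f hx
      have h2 : g y ∈ univ \ T := by simp only [g, dif_neg hy]; exact (e ⟨y, by simp [hy]⟩).2
      rw [hxy] at h1
      simp at h2
      exact h2 h1
    · exfalso
      have h1 : g y ∈ T := by simp only [g, dif_pos hy]; exact Finset.mem_image_of_mem f hy
      have h2 : g x ∈ univ \ T := by simp only [g, dif_neg hx]; exact (e ⟨x, by simp [hx]⟩).2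
      rw [← hxy] at h1
      simp at h2
      exact h2 h1
    · have := congrArg Subtype.val (e.injective (a₁ := ⟨x, by simp [hx]⟩) (a₂ := ⟨y, by simp [hy]⟩)
        (Subtype.ext (by simpa [g, hx, hy] using hxy)))
      exact this
  refine ⟨Equiv.ofBijective g (Finite.injective_iff_bijective.1 hg), fun x hx => ?_⟩
  simp [g, hx]

variable {k L : ℕ}

noncomputable def sigFun (k L : ℕ) (i : Fin k) : XX k L → XX k L := fun x =>
  if h : (act ((i, true) : A k) x.1).length ≤ L
    then ⟨act (i, true) x.1, x.2.1.act _, h⟩ else x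

noncomputable def sigDom (k L : ℕ) (i : Fin k) : Finset (XX k L) :=
  univ.filter (fun x : XX k L => (act ((i, true) : A k) x.1).length ≤ L)

lemma sigFun_injOn (k L : ℕ) (i : Fin k) :
    ∀ x ∈ sigDom k L i, ∀ y ∈ sigDom k L i, sigFun k L i x = sigFun k L i y → x = y := by
  intro x hx y hy hxy
  simp only [sigDom, Finset.mem_filter] at hx hy
  rw [show sigFun k L i x = (⟨act (i, true) x.1, x.2.1.act _, hx.2⟩ : XX k L) from dif_pos hx.2,
    show sigFun k L i y = (⟨act (i, true) y.1, y.2.1.act _, hy.2⟩ : XX k L) from dif_pos hy.2] at hxy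
  have h1 : act ((i, true) : A k) x.1 = act ((i, true) : A k) y.1 :=
    congrArg Subtype.val hxy
  have h2 := (act_act ((i, true) : A k) x.2.1).symm.trans
    (by rw [h1, act_act ((i, true) : A k) y.2.1])
  exact Subtype.ext h2

noncomputable def sig (k L : ℕ) (i : Fin k) : Equiv.Perm (XX k L) :=
  (exists_perm_extend (sigFun k L i) (sigDom k L i) (sigFun_injOn k L i)).choose

lemma sig_spec {k L : ℕ} (i : Fin k) (x : XX k L)
    (h : (act ((i, true) : A k) x.1).length ≤ L) :
    sig k L i x = ⟨act (i, true) x.1, x.2.1.act _, h⟩ := by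
  have h2 := (exists_perm_extend (sigFun k L i) (sigDom k L i) (sigFun_injOn k L i)).choose_spec
    x (by simp [sigDom, h])
  rw [show (exists_perm_extend (sigFun k L i) (sigDom k L i)
      (sigFun_injOn k L i)).choose x = sig k L i x from rfl] at h2
  rw [h2]
  exact dif_pos h

noncomputable def ev (k L : ℕ) (a : A k) : Equiv.Perm (XX k L) :=
  if a.2 then sig k L a.1 else (sig k L a.1)⁻¹

lemma ev_linv (a : A k) : ev k L (linv a) = (ev k L a)⁻¹ := by
  cases a with
  | mk i b => cases b <;> simp [ev, linv]

lemma ev_spec {k L : ℕ} (a : A k) (x : XX k L) (h : (act a x.1).length ≤ L) :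
    ev k L a x = ⟨act a x.1, x.2.1.act _, h⟩ := by
  cases a with
  | mk i b =>
      cases b
      · have hred : Red (act ((i, false) : A k) x.1) := x.2.1.act _
        set y : XX k L := ⟨act ((i, false) : A k) x.1, hred, h⟩ with hy_def
        have hy : act ((i, true) : A k) y.1 = x.1 := by
          have hl : linv ((i, false) : A k) = ((i, true) : A k) := rfl
          rw [← hl]
          exact act_act _ x.2.1
        have hlen : (act ((i, true) : A k) y.1).length ≤ L := by
          rw [hy]; exact x.2.2
        have h1 : sig k L i y = x := by
          rw [sig_spec i y hlen]; exact Subtype.ext hy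
        show (ev k L ((i, false) : A k)) x = y
        have hev : ev k L ((i, false) : A k) = (sig k L i)⁻¹ := by simp [ev]
        rw [hev, ← h1]
        exact Equiv.symm_apply_apply _ _
      · simpa [ev] using sig_spec i x h


lemma Red.of_cons {k : ℕ} {a : A k} {t : List (A k)} (h : Red (a :: t)) : Red t :=
  (List.isChain_cons.1 h).2

lemma wprod_eps {k L : ℕ} (w : List (A k)) (hred : Red w) (hlen : w.length ≤ L) :
    (w.map (ev k L)).prod (eps k L) = ⟨w, hred, hlen⟩ := by
  induction w with
  | nil => rfl
  | cons a t ih =>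
      have hredt : Red t := hred.of_cons
      have hlent : t.length ≤ L := by simp at hlen; omega
      have hact : act a t = a :: t := act_cons_of_red hred
      have hlen' : (act a t).length ≤ L := by rw [hact]; exact hlen
      have e1 : (((a :: t).map (ev k L)).prod (eps k L) : XX k L)
          = (ev k L a (((t.map (ev k L))).prod (eps k L)) : XX k L) := by
            simp [List.prod_cons]
      have e2 : (ev k L a (((t.map (ev k L))).prod (eps k L)) : XX k L) = (ev k L a ⟨t, hredt, hlent⟩ : XX k L) := by rw [ih hredt hlent]
      have e3 : (ev k L a ⟨t, hredt, hlent⟩ : XX k L) = (Subtype.mk (a :: t) ⟨hred, hlen⟩ : XX k L) := by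
        rw [ev_spec a ⟨t, hredt, hlent⟩ hlen']
        exact Subtype.ext hact
      exact e1.trans (e2.trans e3)

lemma wprod_ne_one {k L : ℕ} {w : List (A k)} (hred : Red w) (hne : w ≠ [])
    (hlen : w.length ≤ L) : (w.map (ev k L)).prod ≠ 1 := by
  intro h
  have h2 := wprod_eps w hred hlen
  rw [h] at h2
  exact hne (congrArg Subtype.val h2.symm)


section Graph

variable {k L : ℕ} {Γ : Type*} [Group Γ] [Fintype Γ] [DecidableEq Γ]

/-- the neighbor map for the surgered bipartite Cayley double cover. -/
def nbr (ev : A k → Γ) (p : Γ × Bool) (a : A k) : Γ × Bool :=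
  if p.2 then ((ev a)⁻¹ * p.1, false)
  else if ev a * p.1 = 1 then (ev a, false) else (ev a * p.1, true)

/-- vertex type: everything except the deleted vertex `(1, true)`. -/
def Vt (Γ : Type*) [Group Γ] : Type _ := {p : Γ × Bool // p ≠ (1, true)}

noncomputable instance : Fintype (Vt Γ) := Subtype.fintype _

instance : DecidableEq (Vt Γ) := fun a b => decidable_of_iff (a.1 = b.1) Subtype.ext_iff.symm

variable (ev : A k → Γ)

/-- the graph. -/
def GG : SimpleGraph (Vt Γ) := SimpleGraph.fromRel (fun x y => ∃ a, y.1 = nbr ev x.1 a)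

variable (hW : ∀ w : List (A k), Red w → w ≠ [] → w.length ≤ L → (w.map ev).prod ≠ 1)
variable (hinv : ∀ a, ev (linv a) = (ev a)⁻¹) (hL : 2 ≤ L)

section
include hW hinv hL

lemma ev_inj : Function.Injective ev := by
  intro a b hab
  by_contra hne
  have hred : Red [linv a, b] := by
    refine List.isChain_cons_cons.2 ⟨?_, List.isChain_singleton _⟩
    simpa using fun h => hne h.symm
  refine hW [linv a, b] hred (by simp) (by simpa using hL) ?_
  simp [List.prod_cons, hinv a, hab]

lemma ev_sq_ne_one (a : A k) : ev a * ev a ≠ 1 := by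
  have hred : Red [a, a] := List.isChain_cons_cons.2 ⟨(linv_ne a).symm, List.isChain_singleton _⟩
  have := hW [a, a] hred (by simp) (by simpa using hL)
  simpa [List.prod_cons] using this

lemma ev_ne_one (a : A k) : ev a ≠ 1 := by
  have hred : Red [a] := List.isChain_singleton _
  have := hW [a] hred (by simp) (by simp; omega)
  simpa [List.prod_cons] using this

end

lemma nbr_ne (x : Vt Γ) (a : A k) : nbr ev x.1 a ≠ (1, true) := by
  unfold nbr
  split_ifs with h1 h2
  · simp
  · simp
  · simp only [ne_eq, Prod.mk.injEq, not_and]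
    intro hc
    exact absurd hc h2

/-- neighbor map into the vertex type. -/
def nbrV (x : Vt Γ) (a : A k) : Vt Γ := ⟨nbr ev x.1 a, nbr_ne ev x a⟩

section
include hW hinv hL

lemma nbr_inj (x : Vt Γ) {a b : A k} (h : nbr ev x.1 a = nbr ev x.1 b) : a = b := by
  have hinj := ev_inj ev hW hinv hL
  unfold nbr at h
  by_cases hx : x.1.2
  · rw [if_pos hx, if_pos hx] at h
    have := congrArg Prod.fst h
    simp only at this
    exact hinj (inv_injective (mul_right_cancel this))
  · rw [if_neg hx, if_neg hx] at h
    split_ifs at h with h1 h2 h2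
    · exact hinj (congrArg Prod.fst h)
    · exact absurd (congrArg Prod.snd h) (by simp)
    · exact absurd (congrArg Prod.snd h) (by simp)
    · exact hinj (mul_right_cancel (congrArg Prod.fst h))

lemma adj_iff {x y : Vt Γ} : (GG ev).Adj x y ↔ ∃ a, y.1 = nbr ev x.1 a := by
  constructor
  · intro h
    rw [GG, SimpleGraph.fromRel_adj] at h
    rcases h.2 with h2 | h2
    · exact h2
    · obtain ⟨a, ha⟩ := h2
      unfold nbr at ha
      by_cases hy : y.1.2
      · rw [if_pos hy] at ha
        refine ⟨a, ?_⟩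
        have hx2 : (x.1).2 = false := congrArg Prod.snd ha
        have hx1 : (x.1).1 = (ev a)⁻¹ * (y.1).1 := congrArg Prod.fst ha
        have hne1 : ev a * (x.1).1 = (y.1).1 := by rw [hx1, mul_inv_cancel_left]
        have hy1 : (y.1).1 ≠ 1 := fun hc => y.2 (Prod.ext hc hy)
        unfold nbr
        rw [if_neg (by rw [hx2]; simp), if_neg (by rw [hne1]; exact hy1), hne1]
        exact Prod.ext rfl hy
      · rw [if_neg hy] at ha
        split_ifs at ha with h1
        · refine ⟨linv a, ?_⟩
          have hy1 : (y.1).1 = (ev a)⁻¹ := eq_inv_of_mul_eq_one_right h1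
          have hx2 : (x.1).2 = false := congrArg Prod.snd ha
          have hx1 : (x.1).1 = ev a := congrArg Prod.fst ha
          have hy2 : (y.1).2 = false := by simpa using hy
          unfold nbr
          rw [if_neg (by rw [hx2]; simp),
            if_pos (show ev (linv a) * (x.1).1 = 1 by rw [hinv, hx1]; exact inv_mul_cancel _),
            hinv]
          exact Prod.ext (by rw [hy1]) hy2
        · refine ⟨a, ?_⟩
          have hx2 : (x.1).2 = true := congrArg Prod.snd ha
          have hx1 : (x.1).1 = ev a * (y.1).1 := congrArg Prod.fst ha
          have hy2 : (y.1).2 = false := by simpa using hy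
          unfold nbr
          rw [if_pos hx2]
          exact Prod.ext (by rw [hx1, inv_mul_cancel_left]) hy2
  · rintro ⟨a, ha⟩
    rw [GG, SimpleGraph.fromRel_adj]
    refine ⟨?_, Or.inl ⟨a, ha⟩⟩
    intro hxy
    rw [← hxy] at ha
    unfold nbr at ha
    by_cases hx : x.1.2
    · rw [if_pos hx] at ha
      have h2 : (x.1).2 = false := congrArg Prod.snd ha
      rw [hx] at h2
      exact Bool.noConfusion h2
    · rw [if_neg hx] at ha
      split_ifs at ha with h1
      · have hxx : (x.1).1 = ev a := congrArg Prod.fst ha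
        rw [hxx] at h1
        exact ev_sq_ne_one ev hW hinv hL a h1
      · exact hx (congrArg Prod.snd ha)

lemma nbrV_injective (x : Vt Γ) : Function.Injective (nbrV ev x) := by
  intro a b hab
  exact nbr_inj ev hW hinv hL x (congrArg Subtype.val hab)

lemma neighborFinset_eq (x : Vt Γ) :
    (GG ev).neighborFinset x = Finset.image (nbrV ev x) univ := by
  ext y
  rw [SimpleGraph.mem_neighborFinset, adj_iff ev hW hinv hL]
  simp only [Finset.mem_image, Finset.mem_univ, true_and]
  constructor
  · rintro ⟨a, ha⟩; exact ⟨a, (Subtype.ext ha.symm : nbrV ev x a = y)⟩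
  · rintro ⟨a, ha⟩; exact ⟨a, congrArg Subtype.val ha.symm⟩

lemma GG_regular : (GG ev).IsRegularOfDegree (2 * k) := by
  intro x
  rw [SimpleGraph.degree, neighborFinset_eq ev hW hinv hL x,
    Finset.card_image_of_injective _ (nbrV_injective ev hW hinv hL x)]
  simp [mul_comm]

end


section Walks

noncomputable def stepA {x y : Vt Γ} (h : (GG ev).Adj x y) : A k :=
  ((adj_iff ev hW hinv hL).1 h).choose

lemma stepA_spec {x y : Vt Γ} (h : (GG ev).Adj x y) :
    y.1 = nbr ev x.1 (stepA ev hW hinv hL h) :=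
  ((adj_iff ev hW hinv hL).1 h).choose_spec

noncomputable def stepWord {x y : Vt Γ} (h : (GG ev).Adj x y) : List (A k) :=
  if x.1.2 then [linv (stepA ev hW hinv hL h)]
  else if ev (stepA ev hW hinv hL h) * x.1.1 = 1
    then [stepA ev hW hinv hL h, stepA ev hW hinv hL h]
    else [stepA ev hW hinv hL h]

lemma stepWord_ne_nil {x y : Vt Γ} (h : (GG ev).Adj x y) :
    stepWord ev hW hinv hL h ≠ [] := by
  unfold stepWord; split_ifs <;> simp

lemma stepWord_length {x y : Vt Γ} (h : (GG ev).Adj x y) :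
    (stepWord ev hW hinv hL h).length ≤ 2 := by
  unfold stepWord; split_ifs <;> simp

lemma stepWord_red {x y : Vt Γ} (h : (GG ev).Adj x y) : Red (stepWord ev hW hinv hL h) := by
  unfold stepWord
  split_ifs
  · exact List.isChain_singleton _
  · exact List.isChain_cons_cons.2 ⟨(linv_ne _).symm, List.isChain_singleton _⟩
  · exact List.isChain_singleton _

lemma stepWord_prod {x y : Vt Γ} (h : (GG ev).Adj x y) :
    ((stepWord ev hW hinv hL h).map ev).prod * (x.1).1 = (y.1).1 := by
  have hs := stepA_spec ev hW hinv hL h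
  set a := stepA ev hW hinv hL h with ha_def
  unfold stepWord
  unfold nbr at hs
  by_cases hx : x.1.2
  · rw [if_pos hx] at hs ⊢
    have h1 : (y.1).1 = (ev a)⁻¹ * (x.1).1 := congrArg Prod.fst hs
    simp [List.prod_cons, hinv, h1, ← ha_def]
  · rw [if_neg hx] at hs ⊢
    split_ifs with h1
    · rw [if_pos h1] at hs
      have h2 : (y.1).1 = ev a := congrArg Prod.fst hs
      simp only [List.map_cons, List.map_nil, List.prod_cons, List.prod_nil, mul_one]
      rw [mul_assoc, h1, mul_one, h2]
    · rw [if_neg h1] at hs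
      have h2 : (y.1).1 = ev a * (x.1).1 := congrArg Prod.fst hs
      simp [List.prod_cons, h2, ← ha_def]

noncomputable def walkWord : ∀ {x y : Vt Γ}, (GG ev).Walk x y → List (A k)
  | _, _, SimpleGraph.Walk.nil => []
  | _, _, SimpleGraph.Walk.cons h p => walkWord p ++ stepWord ev hW hinv hL h

lemma walkWord_prod {x y : Vt Γ} (p : (GG ev).Walk x y) :
    ((walkWord ev hW hinv hL p).map ev).prod * (x.1).1 = (y.1).1 := by
  induction p with
  | nil => simp [walkWord]
  | cons h p ih =>
      rw [walkWord, List.map_append, List.prod_append, mul_assoc,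
        stepWord_prod ev hW hinv hL h, ih]

lemma walkWord_length {x y : Vt Γ} (p : (GG ev).Walk x y) :
    (walkWord ev hW hinv hL p).length ≤ 2 * p.length := by
  induction p with
  | nil => simp [walkWord]
  | cons h p ih =>
      rw [walkWord, List.length_append, SimpleGraph.Walk.length_cons]
      have := stepWord_length ev hW hinv hL h
      omega

lemma walkWord_ne_nil {x y : Vt Γ} (p : (GG ev).Walk x y) (hp : p.length ≠ 0) :
    walkWord ev hW hinv hL p ≠ [] := by
  cases p with
  | nil => simp at hp
  | cons h q =>
      rw [walkWord]
      intro hc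
      exact stepWord_ne_nil ev hW hinv hL h (List.append_eq_nil_iff.1 hc).2

lemma linv_injective {k : ℕ} : Function.Injective (linv (k := k)) := by
  intro a b h
  have := congrArg linv h
  simpa using this

lemma junction {x z y : Vt Γ} (h : (GG ev).Adj x z) (h' : (GG ev).Adj z y)
    (hedge : s(x, z) ≠ s(z, y)) :
    ∀ l ∈ (stepWord ev hW hinv hL h').getLast?, ∀ r ∈ (stepWord ev hW hinv hL h).head?,
      r ≠ linv l := by
  have hinj := ev_inj ev hW hinv hL
  have ha := stepA_spec ev hW hinv hL h
  have hb := stepA_spec ev hW hinv hL h'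
  set a := stepA ev hW hinv hL h with ha_def
  set b := stepA ev hW hinv hL h' with hb_def
  unfold stepWord
  unfold nbr at ha hb
  by_cases hx : (x.1).2 = true
  · rw [if_pos hx] at ha
    rw [if_pos hx]
    have hz2 : (z.1).2 = false := congrArg Prod.snd ha
    have hz1 : (z.1).1 = (ev a)⁻¹ * (x.1).1 := congrArg Prod.fst ha
    have hz2' : ¬((z.1).2 = true) := by rw [hz2]; simp
    rw [if_neg hz2'] at hb
    rw [if_neg hz2']
    have key : a ≠ b := by
      intro heq
      rw [← heq] at hb
      by_cases hdeg : ev a * (z.1).1 = 1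
      · rw [hz1, mul_inv_cancel_left] at hdeg
        exact x.2 (Prod.ext hdeg hx)
      · rw [if_neg hdeg] at hb
        have hf1 : (y.1).1 = (x.1).1 := by
          rw [(congrArg Prod.fst hb : (y.1).1 = ev a * (z.1).1), hz1, mul_inv_cancel_left]
        have hyx : y = x := Subtype.ext (Prod.ext hf1
          ((congrArg Prod.snd hb : (y.1).2 = true).trans hx.symm))
        rw [hyx] at hedge
        exact hedge Sym2.eq_swap.symm
    by_cases hdeg : ev b * (z.1).1 = 1
    · rw [if_pos hdeg]
      intro l hl r hr
      simp only [List.getLast?_cons_cons, List.getLast?_singleton, List.head?_cons,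
        Option.mem_def, Option.some.injEq] at hl hr
      subst hl; subst hr
      exact fun hcc => key (linv_injective hcc)
    · rw [if_neg hdeg]
      intro l hl r hr
      simp only [List.getLast?_singleton, List.head?_cons,
        Option.mem_def, Option.some.injEq] at hl hr
      subst hl; subst hr
      exact fun hcc => key (linv_injective hcc)
  · rw [if_neg hx] at ha
    rw [if_neg hx]
    by_cases h1 : ev a * (x.1).1 = 1
    · rw [if_pos h1] at ha
      rw [if_pos h1]
      have hz2 : (z.1).2 = false := congrArg Prod.snd ha
      have hz1 : (z.1).1 = ev a := congrArg Prod.fst ha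
      have hz2' : ¬((z.1).2 = true) := by rw [hz2]; simp
      rw [if_neg hz2'] at hb
      rw [if_neg hz2']
      have key : a ≠ linv b := by
        intro heq
        by_cases hdeg : ev b * (z.1).1 = 1
        · rw [if_pos hdeg] at hb
          have hxb : (x.1).1 = ev b := by
            have h2 : (x.1).1 = (ev a)⁻¹ := eq_inv_of_mul_eq_one_right h1
            rw [h2, heq, hinv, inv_inv]
          have hyx : y = x := Subtype.ext (Prod.ext
            ((congrArg Prod.fst hb : (y.1).1 = ev b).trans hxb.symm)
            ((congrArg Prod.snd hb : (y.1).2 = false).trans (show (x.1).2 = false by simpa using hx).symm))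
          rw [hyx] at hedge
          exact hedge Sym2.eq_swap.symm
        · exact hdeg (by rw [hz1, heq, hinv, mul_inv_cancel])
      by_cases hdeg : ev b * (z.1).1 = 1
      · rw [if_pos hdeg]
        intro l hl r hr
        simp only [List.getLast?_cons_cons, List.getLast?_singleton, List.head?_cons,
          Option.mem_def, Option.some.injEq] at hl hr
        subst hl; subst hr
        exact key
      · rw [if_neg hdeg]
        intro l hl r hr
        simp only [List.getLast?_singleton, List.head?_cons,
          Option.mem_def, Option.some.injEq] at hl hr
        subst hl; subst hr
        exact key
    · rw [if_neg h1] at ha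
      rw [if_neg h1]
      have hz2 : (z.1).2 = true := congrArg Prod.snd ha
      have hz1 : (z.1).1 = ev a * (x.1).1 := congrArg Prod.fst ha
      rw [if_pos hz2] at hb
      rw [if_pos hz2]
      have key : a ≠ b := by
        intro heq
        rw [← heq] at hb
        have hf1 : (y.1).1 = (x.1).1 := by
          rw [(congrArg Prod.fst hb : (y.1).1 = (ev a)⁻¹ * (z.1).1), hz1, inv_mul_cancel_left]
        have hyx : y = x := Subtype.ext (Prod.ext hf1
          ((congrArg Prod.snd hb : (y.1).2 = false).trans (show (x.1).2 = false by simpa using hx).symm))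
        rw [hyx] at hedge
        exact hedge Sym2.eq_swap.symm
      intro l hl r hr
      simp only [List.getLast?_singleton, List.head?_cons,
        Option.mem_def, Option.some.injEq] at hl hr
      subst hl; subst hr
      simpa only [ne_eq, linv_linv] using key

lemma red_walkWord {x y : Vt Γ} (p : (GG ev).Walk x y) (hnod : p.edges.Nodup) :
    Red (walkWord ev hW hinv hL p) := by
  induction p with
  | nil => exact List.isChain_nil
  | cons h q ih =>
      rename_i xx zz yy
      rw [walkWord, Red, List.Chain', List.isChain_append]
      rw [SimpleGraph.Walk.edges_cons, List.nodup_cons] at hnod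
      refine ⟨ih hnod.2, stepWord_red ev hW hinv hL h, ?_⟩
      cases q with
      | nil => simp [walkWord]
      | cons h' q' =>
          rename_i ww
          rw [walkWord, List.getLast?_append_of_ne_nil _ (stepWord_ne_nil ev hW hinv hL h')]
          refine junction ev hW hinv hL h h' ?_
          intro hc
          apply hnod.1
          rw [SimpleGraph.Walk.edges_cons, hc]
          exact List.mem_cons_self

include hW hinv hL in
lemma girth_ge (g : ℕ) (hLg : 2 * g ≤ L) : (g : ℕ∞) ≤ (GG ev).egirth := by
  rw [SimpleGraph.le_egirth]
  intro a w hw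
  rw [Nat.cast_le]
  by_contra hlt
  push_neg at hlt
  have hred := red_walkWord ev hW hinv hL w hw.edges_nodup
  have h3 := hw.three_le_length
  have hne : walkWord ev hW hinv hL w ≠ [] :=
    walkWord_ne_nil ev hW hinv hL w (by omega)
  have hlen : (walkWord ev hW hinv hL w).length ≤ L := by
    have := walkWord_length ev hW hinv hL w
    omega
  have hprod := walkWord_prod ev hW hinv hL w
  have hP : (((walkWord ev hW hinv hL w).map ev).prod) = 1 := by
    have h2 : ((walkWord ev hW hinv hL w).map ev).prod * (a.1).1 = 1 * (a.1).1 := by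
      rw [one_mul, hprod]
    exact mul_right_cancel h2
  exact hW _ hred hne hlen hP

end Walks

section Coloring

def colA {k : ℕ} (a : A k) : ℕ := 2 * (a.1 : ℕ) + (if a.2 then 1 else 2)

lemma colA_mem {k : ℕ} (a : A k) : 1 ≤ colA a ∧ colA a ≤ 2 * k := by
  obtain ⟨i, b⟩ := a
  have hi : (i : ℕ) < k := i.isLt
  cases b <;> simp [colA] <;> omega

lemma colA_inj {k : ℕ} : Function.Injective (colA (k := k)) := by
  rintro ⟨i, bi⟩ ⟨j, bj⟩ h
  have hi : (i : ℕ) < k := i.isLt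
  have hj : (j : ℕ) < k := j.isLt
  cases bi <;> cases bj <;> simp [colA] at h ⊢
  · exact Fin.ext (by omega)
  · omega
  · omega
  · exact Fin.ext (by omega)

noncomputable def lcol (x y : Vt Γ) : ℕ :=
  if h : ∃ a : A k, y.1 = nbr ev x.1 a then colA h.choose else 0

noncomputable def cfun (x y : Vt Γ) : ℕ :=
  if (x.1).2 = (y.1).2 then 2 * k + 1
  else if (x.1).2 = false then lcol ev x y else lcol ev y x

lemma cfun_symm (x y : Vt Γ) : cfun ev x y = cfun ev y x := by
  unfold cfun
  cases hx2 : (x.1).2 <;> cases hy2 : (y.1).2 <;> simp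

noncomputable def cV : Sym2 (Vt Γ) → ℕ := Sym2.lift ⟨cfun ev, cfun_symm ev⟩

lemma cV_mk (x y : Vt Γ) : cV ev s(x, y) = cfun ev x y := rfl

include hW hinv hL in
lemma lcol_eq (x y : Vt Γ) {a : A k} (ha : y.1 = nbr ev x.1 a) : lcol ev x y = colA a := by
  unfold lcol
  rw [dif_pos ⟨a, ha⟩]
  exact congrArg colA (nbr_inj ev hW hinv hL x
    ((Exists.choose_spec (⟨a, ha⟩ : ∃ a, y.1 = nbr ev x.1 a)).symm.trans ha))

include hW hinv hL in
lemma cV_H {x y : Vt Γ} (hx : (x.1).2 = false) (hy : (y.1).2 = true) {a : A k}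
    (ha : y.1 = nbr ev x.1 a) : cV ev s(x, y) = colA a := by
  rw [cV_mk]
  unfold cfun
  rw [if_neg (by rw [hx, hy]; simp), if_pos hx]
  exact lcol_eq ev hW hinv hL x y ha

lemma cV_same {x y : Vt Γ} (hxy : (x.1).2 = (y.1).2) : cV ev s(x, y) = 2 * k + 1 := by
  rw [cV_mk]
  unfold cfun
  rw [if_pos hxy]

include hW hinv hL in
lemma same_side_eq {x y : Vt Γ} (h : (GG ev).Adj x y) (hxy : (x.1).2 = (y.1).2) :
    (x.1).2 = false ∧ (y.1).1 = ((x.1).1)⁻¹ := by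
  obtain ⟨a, ha⟩ := (adj_iff ev hW hinv hL).1 h
  unfold nbr at ha
  by_cases hx : (x.1).2 = true
  · rw [if_pos hx] at ha
    have : (y.1).2 = false := congrArg Prod.snd ha
    rw [hx, this] at hxy
    exact Bool.noConfusion hxy
  · rw [if_neg hx] at ha
    split_ifs at ha with h1
    · refine ⟨by simpa using hx, ?_⟩
      rw [(congrArg Prod.fst ha : (y.1).1 = ev a)]
      rw [show (x.1).1 = (ev a)⁻¹ from eq_inv_of_mul_eq_one_right h1, inv_inv]
    · have h2 : (y.1).2 = true := congrArg Prod.snd ha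
      rw [h2] at hxy
      exact absurd hxy hx

include hW hinv hL in
lemma left_adj {v w : Vt Γ} (h : (GG ev).Adj v w) (hv : (v.1).2 = false)
    (hw : (w.1).2 = true) :
    ∃ a : A k, (w.1).1 = ev a * (v.1).1 ∧ cV ev s(v, w) = colA a := by
  obtain ⟨a, ha⟩ := (adj_iff ev hW hinv hL).1 h
  refine ⟨a, ?_, cV_H ev hW hinv hL hv hw ha⟩
  unfold nbr at ha
  rw [if_neg (by rw [hv]; simp)] at ha
  split_ifs at ha with h1
  · have h2 : (w.1).2 = false := congrArg Prod.snd ha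
    rw [h2] at hw
    exact Bool.noConfusion hw
  · exact congrArg Prod.fst ha

include hW hinv hL in
lemma right_adj {v w : Vt Γ} (h : (GG ev).Adj v w) (hv : (v.1).2 = true) :
    ∃ a : A k, (w.1) = ((ev a)⁻¹ * (v.1).1, false) ∧ cV ev s(v, w) = colA a := by
  obtain ⟨a, ha⟩ := (adj_iff ev hW hinv hL).1 h
  unfold nbr at ha
  rw [if_pos hv] at ha
  have hw2 : (w.1).2 = false := congrArg Prod.snd ha
  refine ⟨a, ha, ?_⟩
  rw [Sym2.eq_swap]
  refine cV_H ev hW hinv hL hw2 hv ?_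
  unfold nbr
  rw [if_neg (by rw [hw2]; simp)]
  have hw1 : (w.1).1 = (ev a)⁻¹ * (v.1).1 := congrArg Prod.fst ha
  have hne : ev a * (w.1).1 = (v.1).1 := by rw [hw1, mul_inv_cancel_left]
  have hv1 : (v.1).1 ≠ 1 := fun hc => v.2 (Prod.ext hc hv)
  rw [if_neg (by rw [hne]; exact hv1), hne]
  exact Prod.ext rfl hv

lemma edge_pick {V : Type*} {G : SimpleGraph V} {e : Sym2 V} {v : V}
    (he : e ∈ G.edgeSet) (hv : v ∈ e) : ∃ w, G.Adj v w ∧ e = s(v, w) := by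
  induction e with
  | _ x y =>
      rw [Sym2.mem_iff] at hv
      rw [SimpleGraph.mem_edgeSet] at he
      rcases hv with rfl | rfl
      · exact ⟨y, he, rfl⟩
      · exact ⟨x, he.symm, Sym2.eq_swap⟩

lemma colA_ne_special {k : ℕ} (a : A k) : colA a ≠ 2 * k + 1 := by
  have := colA_mem a
  omega

include hW hinv hL in
theorem cV_proper : IsProperEdgeColoring (GG ev) (cV ev) := by
  rintro e he f hf hef ⟨v, hve, hvf⟩
  obtain ⟨w, hvw, rfl⟩ := edge_pick he hve
  obtain ⟨w', hvw', rfl⟩ := edge_pick hf hvf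
  have hww : w ≠ w' := fun hc => hef (by rw [hc])
  by_cases hv2 : (v.1).2 = true
  · obtain ⟨a, hwa, hca⟩ := right_adj ev hW hinv hL hvw hv2
    obtain ⟨b, hwb, hcb⟩ := right_adj ev hW hinv hL hvw' hv2
    rw [hca, hcb]
    intro hcc
    exact hww (Subtype.ext (by rw [hwa, hwb, colA_inj hcc]))
  · have hv2' : (v.1).2 = false := by simpa using hv2
    by_cases hw2 : (v.1).2 = (w.1).2
    · by_cases hw'2 : (v.1).2 = (w'.1).2
      · -- both special edges: impossible since they'd coincide
        exfalso
        obtain ⟨h1, h2⟩ := same_side_eq ev hW hinv hL hvw hw2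
        obtain ⟨h1', h2'⟩ := same_side_eq ev hW hinv hL hvw' hw'2
        apply hww
        refine Subtype.ext (Prod.ext (h2.trans h2'.symm) ?_)
        exact hw2.symm.trans hw'2
      · rw [cV_same ev hw2]
        have hw'2t : (w'.1).2 = true := by
          cases hcc : (w'.1).2
          · exact absurd (hv2'.trans hcc.symm) hw'2
          · rfl
        obtain ⟨b, _, hcb⟩ := left_adj ev hW hinv hL hvw' hv2' hw'2t
        rw [hcb]
        exact fun hcc => colA_ne_special b hcc.symm
    · have hw2t : (w.1).2 = true := by
        cases hcc : (w.1).2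
        · exact absurd (hv2'.trans hcc.symm) hw2
        · rfl
      obtain ⟨a, hwa, hca⟩ := left_adj ev hW hinv hL hvw hv2' hw2t
      rw [hca]
      by_cases hw'2 : (v.1).2 = (w'.1).2
      · rw [cV_same ev hw'2]
        exact colA_ne_special a
      · have hw'2t : (w'.1).2 = true := by
          cases hcc : (w'.1).2
          · exact absurd (hv2'.trans hcc.symm) hw'2
          · rfl
        obtain ⟨b, hwb, hcb⟩ := left_adj ev hW hinv hL hvw' hv2' hw'2t
        rw [hcb]
        intro hcc
        apply hww
        refine Subtype.ext (Prod.ext ?_ (hw2t.trans hw'2t.symm))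
        rw [hwa, hwb, colA_inj hcc]

include hW hinv hL in
lemma cV_range : ∀ e ∈ (GG ev).edgeSet, cV ev e ∈ Finset.Icc 1 (2 * k + 1) := by
  intro e he
  induction e with
  | _ x y =>
      rw [SimpleGraph.mem_edgeSet] at he
      rw [Finset.mem_Icc]
      by_cases hxy : (x.1).2 = (y.1).2
      · rw [cV_same ev hxy]; omega
      · by_cases hx : (x.1).2 = true
        · obtain ⟨a, _, hca⟩ := right_adj ev hW hinv hL he hx
          rw [hca]
          have := colA_mem a
          omega
        · have hx' : (x.1).2 = false := by simpa using hx
          have hy : (y.1).2 = true := by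
            cases hcc : (y.1).2
            · exact absurd (hx'.trans hcc.symm) hxy
            · rfl
          obtain ⟨a, _, hca⟩ := left_adj ev hW hinv hL he hx' hy
          rw [hca]
          have := colA_mem a
          omega

/-- left vertex bearing a group element from the generator range. -/
def vL (a : A k) : Vt Γ := ⟨(ev a, false), by simp⟩

include hW hinv hL in
lemma count_special :
    (univ.filter (fun e => e ∈ (GG ev).edgeSet ∧ cV ev e = 2 * k + 1)).card = k := by
  have hinj := ev_inj ev hW hinv hL
  have himg : univ.filter (fun e => e ∈ (GG ev).edgeSet ∧ cV ev e = 2 * k + 1)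
      = Finset.image (fun i : Fin k => s(vL ev (i, false), vL ev (i, true))) univ := by
    ext e
    simp only [Finset.mem_filter, Finset.mem_univ, true_and, Finset.mem_image]
    induction e with
    | _ x y =>
        constructor
        · rintro ⟨he, hce⟩
          rw [SimpleGraph.mem_edgeSet] at he
          have hxy : (x.1).2 = (y.1).2 := by
            by_contra hne
            by_cases hx : (x.1).2 = true
            · obtain ⟨a, _, hca⟩ := right_adj ev hW hinv hL he hx
              rw [hca] at hce
              exact colA_ne_special a hce
            · have hx' : (x.1).2 = false := by simpa using hx
              have hy : (y.1).2 = true := by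
                cases hcc : (y.1).2
                · exact absurd (hx'.trans hcc.symm) hne
                · rfl
              obtain ⟨a, _, hca⟩ := left_adj ev hW hinv hL he hx' hy
              rw [hca] at hce
              exact colA_ne_special a hce
          obtain ⟨a, ha⟩ := (adj_iff ev hW hinv hL).1 he
          obtain ⟨hx2, _⟩ := same_side_eq ev hW hinv hL he hxy
          unfold nbr at ha
          rw [if_neg (by rw [hx2]; simp)] at ha
          split_ifs at ha with h1
          · have hx1 : (x.1).1 = ev (linv a) := by
              rw [hinv]
              exact eq_inv_of_mul_eq_one_right h1
            have hxv : x = vL ev (linv a) := Subtype.ext (Prod.ext hx1 hx2)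
            have hyv : y = vL ev a := Subtype.ext ha
            obtain ⟨i, bo⟩ := a
            cases bo
            · exact ⟨i, by rw [hxv, hyv, show linv ((i, false) : A k) = (i, true) from rfl,
                Sym2.eq_swap]⟩
            · exact ⟨i, by rw [hxv, hyv, show linv ((i, true) : A k) = (i, false) from rfl]⟩
          · have h2 : (y.1).2 = true := congrArg Prod.snd ha
            rw [h2] at hxy
            rw [hxy] at hx2
            exact Bool.noConfusion hx2
        · rintro ⟨i, hi⟩
          have hadj : (GG ev).Adj (vL ev ((i, false) : A k)) (vL ev ((i, true) : A k)) := by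
            rw [adj_iff ev hW hinv hL]
            refine ⟨(i, true), ?_⟩
            unfold nbr vL
            rw [if_neg (by simp)]
            rw [if_pos (show ev ((i, true) : A k) * ev ((i, false) : A k) = 1 by
              rw [show ((i, false) : A k) = linv ((i, true) : A k) from rfl, hinv,
                mul_inv_cancel])]
          have hcol : cV ev s(vL ev ((i, false) : A k), vL ev ((i, true) : A k))
              = 2 * k + 1 := cV_same ev rfl
          rw [← hi]
          exact ⟨((GG ev).mem_edgeSet).2 hadj, hcol⟩
  rw [himg, Finset.card_image_of_injective _ ?_, Finset.card_univ, Fintype.card_fin]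
  intro i j hij
  rw [Sym2.eq_iff] at hij
  rcases hij with ⟨h1, _⟩ | ⟨h1, _⟩
  · have := hinj (congrArg (fun z : Vt Γ => (z.1).1) h1)
    exact congrArg Prod.fst this
  · have := hinj (congrArg (fun z : Vt Γ => (z.1).1) h1)
    exact absurd (congrArg Prod.snd this) (by simp)

end Coloring

end Graph


section LowerBound

variable {W : Type*} [Fintype W] [DecidableEq W]

lemma cover_card {G : SimpleGraph W} {c : Sym2 W → ℕ} (hc2 : IsProperEdgeColoring G c)
    (i : ℕ) (hodd : Fintype.card W % 2 = 1) :
    2 * (G.edgeFinset.filter (fun e => c e = i)).card + 1 ≤ Fintype.card W := by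
  classical
  set F := G.edgeFinset.filter (fun e => c e = i) with hF
  have hmem : ∀ e ∈ F, e ∈ G.edgeSet ∧ c e = i := by
    intro e he
    rw [hF, Finset.mem_filter, SimpleGraph.mem_edgeFinset] at he
    exact he
  have hcard2 : ∀ e ∈ F, (univ.filter (fun v : W => v ∈ e)).card = 2 := by
    intro e he
    have he' := (hmem e he).1
    induction e with
    | _ x y =>
        have hadj : G.Adj x y := (SimpleGraph.mem_edgeSet G).1 he'
        have hxy : univ.filter (fun v : W => v ∈ s(x, y)) = {x, y} := by
          ext z
          simp [Sym2.mem_iff]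
        rw [hxy, Finset.card_insert_of_notMem (by simp [hadj.ne]), Finset.card_singleton]
  have hdisj : ∀ e ∈ F, ∀ f ∈ F, e ≠ f →
      Disjoint (univ.filter (fun v : W => v ∈ e)) (univ.filter (fun v : W => v ∈ f)) := by
    intro e he f hf hef
    rw [Finset.disjoint_left]
    intro v hv1 hv2
    rw [Finset.mem_filter] at hv1 hv2
    exact hc2 e (hmem e he).1 f (hmem f hf).1 hef ⟨v, hv1.2, hv2.2⟩
      ((hmem e he).2.trans (hmem f hf).2.symm)
  have hbi := Finset.card_biUnion hdisj
  have hsum : ∑ e ∈ F, (univ.filter (fun v : W => v ∈ e)).card = 2 * F.card := by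
    rw [Finset.sum_congr rfl hcard2, Finset.sum_const, smul_eq_mul, mul_comm]
  have hle : (F.biUnion (fun e => univ.filter (fun v : W => v ∈ e))).card ≤ Fintype.card W :=
    le_trans (Finset.card_le_univ _) (le_of_eq Finset.card_univ)
  rw [hbi, hsum] at hle
  omega

lemma lower_bound {G : SimpleGraph W} {kk : ℕ}
    (hreg : G.IsRegularOfDegree (2 * kk))
    (hodd : Fintype.card W % 2 = 1)
    (c : Sym2 W → ℕ) (hc1 : ∀ e ∈ G.edgeSet, c e ∈ Finset.Icc 1 (2 * kk + 1))
    (hc2 : IsProperEdgeColoring G c) :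
    kk ≤ (univ.filter (fun e => e ∈ G.edgeSet ∧ c e = 2 * kk + 1)).card := by
  classical
  set n := Fintype.card W with hn
  have hsplit : G.edgeFinset.card
      = ∑ i ∈ Finset.Icc 1 (2 * kk + 1), (G.edgeFinset.filter (fun e => c e = i)).card :=
    Finset.card_eq_sum_card_fiberwise (fun e he => hc1 e (SimpleGraph.mem_edgeFinset.1 he))
  have hhs : n * (2 * kk) = 2 * G.edgeFinset.card := by
    rw [← SimpleGraph.sum_degrees_eq_twice_card_edges,
      Finset.sum_congr rfl (fun v _ => hreg v), Finset.sum_const, smul_eq_mul, Finset.card_univ]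
  have hIcc : Finset.Icc 1 (2 * kk + 1) = insert (2 * kk + 1) (Finset.Icc 1 (2 * kk)) := by
    ext j
    simp only [Finset.mem_Icc, Finset.mem_insert]
    omega
  have hnotmem : (2 * kk + 1) ∉ Finset.Icc 1 (2 * kk) := by
    simp
  rw [hIcc, Finset.sum_insert hnotmem] at hsplit
  set S := ∑ i ∈ Finset.Icc 1 (2 * kk), (G.edgeFinset.filter (fun e => c e = i)).card with hS
  have hb2 : 2 * S + 2 * kk ≤ 2 * kk * n := by
    have h1 : ∑ i ∈ Finset.Icc 1 (2 * kk),
        (2 * (G.edgeFinset.filter (fun e => c e = i)).card + 1) = 2 * S + 2 * kk := by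
      rw [Finset.sum_add_distrib, ← Finset.mul_sum, Finset.sum_const, Nat.card_Icc,
        smul_eq_mul]
      omega
    have h2 : ∑ _i ∈ Finset.Icc 1 (2 * kk), n = 2 * kk * n := by
      rw [Finset.sum_const, Nat.card_Icc, smul_eq_mul, Nat.add_sub_cancel]
    calc 2 * S + 2 * kk = ∑ i ∈ Finset.Icc 1 (2 * kk),
          (2 * (G.edgeFinset.filter (fun e => c e = i)).card + 1) := h1.symm
      _ ≤ ∑ _i ∈ Finset.Icc 1 (2 * kk), n :=
          Finset.sum_le_sum (fun i _ => cover_card hc2 i hodd)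
      _ = 2 * kk * n := h2
  have htarget : univ.filter (fun e => e ∈ G.edgeSet ∧ c e = 2 * kk + 1)
      = G.edgeFinset.filter (fun e => c e = 2 * kk + 1) := by
    ext e
    simp [Finset.mem_filter, SimpleGraph.mem_edgeFinset]
  rw [htarget]
  set t := (G.edgeFinset.filter (fun e => c e = 2 * kk + 1)).card with ht
  have hx2 : 2 * kk * n = 2 * t + 2 * S := by
    calc 2 * kk * n = n * (2 * kk) := by ring
      _ = 2 * G.edgeFinset.card := hhs
      _ = 2 * (t + S) := by rw [hsplit]
      _ = 2 * t + 2 * S := by ring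
  have hfinal : 2 * S + 2 * kk ≤ 2 * t + 2 * S := hx2 ▸ hb2
  omega

end LowerBound

section Transport

variable {α β : Type*} [Fintype α] [DecidableEq α] [Fintype β] [DecidableEq β]

lemma comap_degree (e : α ≃ β) (G : SimpleGraph β) (v : α) :
    (G.comap e).degree v = G.degree (e v) := by
  classical
  have h : (G.comap (e : α → β)).neighborFinset v
      = (G.neighborFinset (e v)).map e.symm.toEmbedding := by
    ext w
    rw [Finset.mem_map_equiv]
    simp [SimpleGraph.mem_neighborFinset]
  rw [SimpleGraph.degree, SimpleGraph.degree, h, Finset.card_map]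

lemma comap_egirth (e : α ≃ β) (G : SimpleGraph β) {g : ℕ∞} (h : g ≤ G.egirth) :
    g ≤ (G.comap (e : α → β)).egirth := by
  rw [SimpleGraph.le_egirth] at h ⊢
  intro a w hw
  let f : (G.comap (e : α → β)) →g G := ⟨(e : α → β), fun {x y} hxy => hxy⟩
  have hfinj : Function.Injective f := e.injective
  have := h (e a) (w.map f) ((SimpleGraph.Walk.map_isCycle_iff_of_injective hfinj).2 hw)
  rwa [SimpleGraph.Walk.length_map] at this

lemma resistance_mem_of (e' : α ≃ β) (G : SimpleGraph β) (G' : SimpleGraph α)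
    (hadj : ∀ x y, G'.Adj x y ↔ G.Adj (e' x) (e' y)) (d r : ℕ)
    (h : ∃ c : Sym2 β → ℕ, (∀ s ∈ G.edgeSet, c s ∈ Finset.Icc 1 (d + 1)) ∧
      IsProperEdgeColoring G c ∧
      (univ.filter (fun s => s ∈ G.edgeSet ∧ c s = d + 1)).card = r) :
    ∃ c : Sym2 α → ℕ, (∀ s ∈ G'.edgeSet, c s ∈ Finset.Icc 1 (d + 1)) ∧
      IsProperEdgeColoring G' c ∧
      (univ.filter (fun s => s ∈ G'.edgeSet ∧ c s = d + 1)).card = r := by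
  classical
  obtain ⟨c, hc1, hc2, hc3⟩ := h
  have hmape : ∀ s : Sym2 α, s ∈ G'.edgeSet ↔ Sym2.map e' s ∈ G.edgeSet := by
    intro s
    induction s with
    | _ x y => simp [SimpleGraph.mem_edgeSet, Sym2.map_pair_eq, hadj]
  have hretr : ∀ s : Sym2 α, Sym2.map e'.symm (Sym2.map e' s) = s := by
    intro s
    rw [Sym2.map_map]
    have hcomp : ((e'.symm : β → α) ∘ (e' : α → β)) = id := by
      funext z
      simp
    rw [hcomp, Sym2.map_id]
    rfl
  have hretr2 : ∀ t : Sym2 β, Sym2.map e' (Sym2.map e'.symm t) = t := by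
    intro t
    rw [Sym2.map_map]
    have hcomp : ((e' : α → β) ∘ (e'.symm : β → α)) = id := by
      funext z
      simp
    rw [hcomp, Sym2.map_id]
    rfl
  refine ⟨fun s => c (Sym2.map e' s), ?_, ?_, ?_⟩
  · intro s hs
    exact hc1 _ ((hmape s).1 hs)
  · intro s hs t ht hst hshare
    refine hc2 _ ((hmape s).1 hs) _ ((hmape t).1 ht) ?_ ?_
    · intro hcc
      exact hst (by rw [← hretr s, hcc, hretr t])
    · obtain ⟨v, hv1, hv2⟩ := hshare
      exact ⟨e' v, Sym2.mem_map.2 ⟨v, hv1, rfl⟩, Sym2.mem_map.2 ⟨v, hv2, rfl⟩⟩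
  · rw [← hc3]
    apply Finset.card_bij (fun s _ => Sym2.map e' s)
    · intro s hs
      rw [Finset.mem_filter] at hs ⊢
      exact ⟨Finset.mem_univ _, (hmape s).1 hs.2.1, hs.2.2⟩
    · intro s hs t ht hst
      rw [← hretr s, hst, hretr t]
    · intro t ht
      rw [Finset.mem_filter] at ht
      refine ⟨Sym2.map e'.symm t, ?_, hretr2 t⟩
      rw [Finset.mem_filter]
      refine ⟨Finset.mem_univ _, ?_, ?_⟩
      · rw [hmape, hretr2]
        exact ht.2.1
      · show c (Sym2.map e' (Sym2.map e'.symm t)) = d + 1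
        rw [hretr2]
        exact ht.2.2

lemma resistance_comap (e' : α ≃ β) (G : SimpleGraph β) (d : ℕ) :
    resistance (G.comap (e' : α → β)) d = resistance G d := by
  unfold resistance
  congr 1
  ext r
  simp only [Set.mem_setOf_eq]
  constructor
  · intro h
    exact resistance_mem_of e'.symm (G.comap (e' : α → β)) G
      (fun x y => by simp [SimpleGraph.comap_adj]) d r h
  · exact resistance_mem_of e' G (G.comap (e' : α → β)) (fun x y => Iff.rfl) d r

lemma card_Vt_odd (Γ : Type*) [Group Γ] [Fintype Γ] [DecidableEq Γ] :
    Fintype.card (Vt Γ) % 2 = 1 := by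
  classical
  have h1 : Fintype.card (Vt Γ) = Fintype.card (Γ × Bool) - 1 := by
    have h := Fintype.card_subtype_compl (fun p : Γ × Bool => p = (1, true))
    rw [Fintype.card_subtype_eq] at h
    calc Fintype.card (Vt Γ) = Fintype.card {p : Γ × Bool // ¬ p = (1, true)} := by
          convert rfl
          rfl
      _ = Fintype.card (Γ × Bool) - 1 := h
  have h2 : Fintype.card (Γ × Bool) = 2 * Fintype.card Γ := by
    rw [Fintype.card_prod, Fintype.card_bool]
    ring
  have h3 : 1 ≤ Fintype.card Γ := Fintype.card_pos
  omega

end Transport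

end Aux

/-- For every even `d ≥ 4` and every `g`, there is a `d`-regular
graph with girth at least `g` and resistance exactly `d / 2`. -/


theorem exists_regular_girth_resistance (d : ℕ) (hd : Even d) (hd4 : 4 ≤ d)
    (g : ℕ) :
    ∃ (n : ℕ) (G : SimpleGraph (Fin n)),
      G.IsRegularOfDegree d ∧ (g : ℕ∞) ≤ G.egirth ∧ resistance G d = d / 2 := by
  classical
  obtain ⟨k, rfl⟩ := hd
  have hk2 : 2 ≤ k := by omega
  rw [show k + k = 2 * k by ring]
  set L := 2 * g + 2 with hLdef
  have hL : 2 ≤ L := by omega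
  set Γ := Equiv.Perm (Aux.XX k L) with hGamma
  set ev0 : Aux.A k → Γ := Aux.ev k L with hev
  have hW : ∀ w : List (Aux.A k), Aux.Red w → w ≠ [] → w.length ≤ L →
      (w.map ev0).prod ≠ 1 := fun w h1 h2 h3 => Aux.wprod_ne_one h1 h2 h3
  have hinv : ∀ a, ev0 (Aux.linv a) = (ev0 a)⁻¹ := fun a => Aux.ev_linv a
  set n := Fintype.card (Aux.Vt Γ) with hn
  set eqv : Fin n ≃ Aux.Vt Γ := (Fintype.equivFin (Aux.Vt Γ)).symm with heqv
  refine ⟨n, (Aux.GG ev0).comap (eqv : Fin n → Aux.Vt Γ), ?_, ?_, ?_⟩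
  · intro v
    convert (Aux.comap_degree eqv (Aux.GG ev0) v).trans ?_
    exact Aux.GG_regular ev0 hW hinv hL (eqv v)
  · exact Aux.comap_egirth eqv (Aux.GG ev0)
      (Aux.girth_ge ev0 hW hinv hL g (by omega))
  · rw [Aux.resistance_comap eqv (Aux.GG ev0) (2 * k),
      show 2 * k / 2 = k by omega]
    have hmemk : k ∈ {r | ∃ c : Sym2 (Aux.Vt Γ) → ℕ,
        (∀ e ∈ (Aux.GG ev0).edgeSet, c e ∈ Finset.Icc 1 (2 * k + 1)) ∧
        IsProperEdgeColoring (Aux.GG ev0) c ∧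
        (univ.filter (fun e => e ∈ (Aux.GG ev0).edgeSet ∧ c e = 2 * k + 1)).card = r} :=
      ⟨Aux.cV ev0, Aux.cV_range ev0 hW hinv hL, Aux.cV_proper ev0 hW hinv hL,
        Aux.count_special ev0 hW hinv hL⟩
    unfold resistance
    apply le_antisymm
    · exact Nat.sInf_le hmemk
    · refine le_csInf ⟨k, hmemk⟩ ?_
      rintro r ⟨c, hc1, hc2, hc3⟩
      rw [← hc3]
      exact Aux.lower_bound (Aux.GG_regular ev0 hW hinv hL) (Aux.card_Vt_odd Γ) c hc1 hc2


end AddEdge
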